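/- Let G be a profinite group (or abstract group), E₁, E₂ divisible abelian G-modules with common m-torsion module Δ, A = (E₁ × E₂)/Δ_E. Let μ₁: E₁^G → H¹(G, Δ) and μ₂: E₂^G → H¹(G, Δ) be the connecting maps from the Kummer sequences 0 → Δ → Eᵢ → Eᵢ → 0 (multiplication by m). Then for all a ∈ A^G, μ₁(p_*(a)) = −μ₂(q_*(a)). -/
import Mathlib


/-- Let `G` act on divisible abelian groups `E₁`, `E₂` with common `m`-torsion
`Δ` (identified via injective equivariant `j₁`, `j₂` with image the `m`-torsion), and let
`A = (E₁ × E₂)/Δ_E`. For every `G`-invariant `a ∈ A^G` (represented by `x` with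
`g • x − x ∈ Δ_E` for all `g`), `μ₁(p_*(a)) = −μ₂(q_*(a))` in `H¹(G, Δ)`: i.e. for any
lifts `e₁'`, `e₂'` with `m • e₁' = p_*(a) = m • x.1`, `m • e₂' = q_*(a) = m • x.2`, the sum of
the Kummer cocycles `δ₁, δ₂ : G → Δ` (defined by `jᵢ (δᵢ g) = g • êᵢ − êᵢ`) is a
coboundary. -/
theorem stmt_10 (G : Type*) [Group G] (E₁ E₂ Δ : Type*)
    [AddCommGroup E₁] [AddCommGroup E₂] [AddCommGroup Δ]
    [DistribMulAction G E₁] [DistribMulAction G E₂] [DistribMulAction G Δ]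
    (m : ℕ) (hm : 2 ≤ m)
    (hdiv₁ : ∀ e : E₁, ∃ e', m • e' = e) (hdiv₂ : ∀ e : E₂, ∃ e', m • e' = e)
    (j₁ : Δ →+ E₁) (j₂ : Δ →+ E₂)
    (hj₁ : Function.Injective j₁) (hj₂ : Function.Injective j₂)
    (hj₁G : ∀ (g : G) (d : Δ), j₁ (g • d) = g • j₁ d)
    (hj₂G : ∀ (g : G) (d : Δ), j₂ (g • d) = g • j₂ d)
    (hj₁tor : ∀ e : E₁, (∃ d, j₁ d = e) ↔ m • e = 0)
    (hj₂tor : ∀ e : E₂, (∃ d, j₂ d = e) ↔ m • e = 0)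
    (ΔE : AddSubgroup (E₁ × E₂)) (hΔE : ∀ x, x ∈ ΔE ↔ ∃ d, x = (j₁ d, -j₂ d))
    (x : E₁ × E₂) (hx : ∀ g : G, g • x - x ∈ ΔE)
    (e₁' : E₁) (e₂' : E₂) (he₁' : m • e₁' = m • x.1) (he₂' : m • e₂' = m • x.2)
    (δ₁ δ₂ : G → Δ)
    (hδ₁ : ∀ g : G, j₁ (δ₁ g) = g • e₁' - e₁') (hδ₂ : ∀ g : G, j₂ (δ₂ g) = g • e₂' - e₂') :
    ∃ c : Δ, ∀ g : G, δ₁ g + δ₂ g = g • c - c := by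
  obtain ⟨a, ha⟩ : ∃ a, j₁ a = e₁' - x.1 := (hj₁tor _).mpr (by
    rw [smul_sub, he₁', sub_self])
  obtain ⟨b, hb⟩ : ∃ b, j₂ b = e₂' - x.2 := (hj₂tor _).mpr (by
    rw [smul_sub, he₂', sub_self])
  refine ⟨a + b, fun g => ?_⟩
  obtain ⟨d, hd⟩ := (hΔE _).mp (hx g)
  have hd1 : g • x.1 - x.1 = j₁ d := congrArg Prod.fst hd
  have hd2 : g • x.2 - x.2 = -j₂ d := congrArg Prod.snd hd
  have h1 : δ₁ g = d + (g • a - a) := by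
    apply hj₁
    rw [hδ₁, map_add, map_sub, hj₁G, ha, ← hd1, smul_sub]
    abel
  have h2 : δ₂ g = -d + (g • b - b) := by
    apply hj₂
    rw [hδ₂, map_add, map_sub, hj₂G, hb, map_neg, ← hd2, smul_sub]
    abel
  rw [h1, h2, smul_add]
  abel
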